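/- The function f₀(u,x) = u^(-5/2)(u x² + 2)^(-5/2) is an exact solution of the linear equation f_ux + (1/4)∂_x(x³ f_x) - (15/4) x f = 0 for u > 0 and x > 0. -/

import Mathlib

open Real

theorem explicit_linear_solution :
    let f : ℝ → ℝ → ℝ := fun u x => u ^ (-(5:ℝ)/2) * (u * x ^ 2 + 2) ^ (-(5:ℝ)/2)
    ∀ u x : ℝ, 0 < u → 0 < x →
      deriv (fun x' => deriv (fun u' => f u' x') u) x
        + (1/4) * deriv (fun x' => x' ^ 3 * deriv (fun x'' => f u x'') x') x
        - (15/4) * x * f u x = 0 := by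
  intro f u x hu hx
  set p : ℝ := -(5:ℝ)/2 with hp
  have hX : ∀ x' : ℝ, (0:ℝ) < u * x' ^ 2 + 2 := fun x' => by positivity
  have hXd : ∀ x' : ℝ, HasDerivAt (fun y : ℝ => u * y ^ 2 + 2) (u * (2 * x' ^ 1)) x' :=
    fun x' => ((hasDerivAt_pow 2 x').const_mul u).add_const 2
  have e1 : (fun x' : ℝ => deriv (fun u' => f u' x') u)
      = fun x' : ℝ => p * u ^ (p - 1) * (u * x' ^ 2 + 2) ^ p
        + u ^ p * (x' ^ 2 * p * (u * x' ^ 2 + 2) ^ (p - 1)) := by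
    funext x'
    have h2 : HasDerivAt (fun u' : ℝ => u' * x' ^ 2 + 2) (x' ^ 2) u := by
      simpa using ((hasDerivAt_id u).mul_const (x' ^ 2)).add_const (2:ℝ)
    exact ((hasDerivAt_rpow_const (Or.inl hu.ne')).mul
      (h2.rpow_const (Or.inl (hX x').ne'))).deriv
  have e2 : ∀ x' : ℝ, deriv (fun x'' => f u x'') x'
      = u ^ p * (u * (2 * x' ^ 1) * p * (u * x' ^ 2 + 2) ^ (p - 1)) := by
    intro x'
    exact (((hXd x').rpow_const (Or.inl (hX x').ne')).const_mul (u ^ p)).deriv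
  rw [e1]
  simp only [e2]
  have D1 : deriv (fun x' : ℝ => p * u ^ (p - 1) * (u * x' ^ 2 + 2) ^ p
        + u ^ p * (x' ^ 2 * p * (u * x' ^ 2 + 2) ^ (p - 1))) x
      = p * u ^ (p - 1) * (u * (2 * x ^ 1) * p * (u * x ^ 2 + 2) ^ (p - 1))
        + u ^ p * ((2 * x ^ 1 * p) * (u * x ^ 2 + 2) ^ (p - 1)
          + x ^ 2 * p * (u * (2 * x ^ 1) * (p - 1) * (u * x ^ 2 + 2) ^ (p - 1 - 1))) := by
    have t1 := ((hXd x).rpow_const (p := p) (Or.inl (hX x).ne')).const_mul (p * u ^ (p - 1))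
    have t2 := (((hasDerivAt_pow 2 x).mul_const p).mul
      ((hXd x).rpow_const (p := p - 1) (Or.inl (hX x).ne'))).const_mul (u ^ p)
    have := (t1.add t2).deriv
    exact this.trans (by ring)
  have D2 : deriv (fun x' : ℝ => x' ^ 3
        * (u ^ p * (u * (2 * x' ^ 1) * p * (u * x' ^ 2 + 2) ^ (p - 1)))) x
      = (3 * x ^ 2) * (u ^ p * (u * (2 * x ^ 1) * p * (u * x ^ 2 + 2) ^ (p - 1)))
        + x ^ 3 * (u ^ p * ((u * (2 * 1 * x ^ 0) * p) * (u * x ^ 2 + 2) ^ (p - 1)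
          + (u * (2 * x ^ 1) * p) * (u * (2 * x ^ 1) * (p - 1) * (u * x ^ 2 + 2) ^ (p - 1 - 1)))) := by
    have inner : HasDerivAt (fun x' : ℝ =>
        u ^ p * (u * (2 * x' ^ 1) * p * (u * x' ^ 2 + 2) ^ (p - 1)))
        (u ^ p * ((u * (2 * 1 * x ^ 0) * p) * (u * x ^ 2 + 2) ^ (p - 1)
          + (u * (2 * x ^ 1) * p) * (u * (2 * x ^ 1) * (p - 1) * (u * x ^ 2 + 2) ^ (p - 1 - 1)))) x := by
      have h1 : HasDerivAt (fun x' : ℝ => u * (2 * x' ^ 1) * p) (u * (2 * 1 * x ^ 0) * p) x := by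
        simpa using (((hasDerivAt_pow 1 x).const_mul 2).const_mul u).mul_const p
      exact (h1.mul ((hXd x).rpow_const (p := p - 1) (Or.inl (hX x).ne'))).const_mul (u ^ p)
    have := ((hasDerivAt_pow 3 x).mul inner).deriv
    exact this.trans (by ring)
  rw [D1, D2]
  -- now pure rpow algebra
  have hXne := (hX x).ne'
  have hune := hu.ne'
  have r1 : u ^ (p - 1) = u ^ p / u := by
    rw [Real.rpow_sub hu, Real.rpow_one]
  have r2 : (u * x ^ 2 + 2) ^ (p - 1) = (u * x ^ 2 + 2) ^ p / (u * x ^ 2 + 2) := by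
    rw [Real.rpow_sub (hX x), Real.rpow_one]
  have r3 : (u * x ^ 2 + 2) ^ (p - 1 - 1)
      = (u * x ^ 2 + 2) ^ p / (u * x ^ 2 + 2) ^ 2 := by
    rw [show p - 1 - 1 = p - (2:ℕ) by push_cast; ring, Real.rpow_sub (hX x),
      Real.rpow_natCast]
  simp only [f]
  rw [r1, r2, r3]
  have hXne2 : (u * x ^ 2 + 2) ≠ 0 := hXne
  field_simp
  rw [hp]
  ring
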